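/- Under the hypotheses of the perturbation theorem with m = 1 — eigenpairs (v_1,λ_1), (v_2,λ_2), (v_3,λ_3) of G, 0 < |λ_3| < |λ_2| ≤ |λ_1|, v_j also eigenvectors of A with λ̃_1 λ̃_2 > 0, γ = v_1ᵀv_2, and opposite signs λ_1 > 0 > λ_2 or λ_2 > 0 > λ_1 — there exists ε̃ ≠ 0 such that the spectral radius of the coefficient matrix T̃(ε̃) equals |λ_3|, which is strictly smaller than ρ(T̃(0)) = |λ_2|; i.e., max{|λ(ε̃,γ)|, |λ_3|} = |λ_3| < |λ_2|. -/

import Mathlib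

theorem stmt17 (l1 l2 l3 t1 t2 γ : ℝ)
    (h3 : 0 < |l3|) (h32 : |l3| < |l2|) (h21 : |l2| ≤ |l1|)
    (ht : t1 * t2 > 0) (hsign : l1 * l2 < 0)
    (hden : ∀ ε : ℝ, t2 * ε ^ 2 + γ * (t1 + t2) * ε + t1 ≠ 0)
    (lam : ℝ → ℝ)
    (hlam : ∀ ε, lam ε =
      (l1 * t2 * ε ^ 2 + γ * (l1 * t2 + l2 * t1) * ε + l2 * t1)
        / (t2 * ε ^ 2 + γ * (t1 + t2) * ε + t1)) :
    (∃ e : ℝ, e ≠ 0 ∧ max |lam e| |l3| = |l3|) ∧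
    |l3| < |l2| ∧ max |lam 0| |l3| = |l2| := by
  have hl1 : l1 ≠ 0 := fun h => by simp [h] at hsign
  have hl2 : l2 ≠ 0 := fun h => by simp [h] at hsign
  have ht1 : t1 ≠ 0 := fun h => by simp [h] at ht
  have ht2 : t2 ≠ 0 := fun h => by simp [h] at ht
  set b := γ * (l1 * t2 + l2 * t1) with hb
  set D := b ^ 2 - 4 * (l1 * t2) * (l2 * t1) with hDdef
  have hD : 0 < D := by nlinarith [sq_nonneg b]
  set s := Real.sqrt D with hsdef
  have hs : s ^ 2 = D := Real.sq_sqrt hD.le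
  have ha : 2 * (l1 * t2) ≠ 0 := by
    have := mul_ne_zero hl1 ht2
    simpa using this
  set e := (-b + s) / (2 * (l1 * t2)) with hedef
  have hnum : l1 * t2 * e ^ 2 + b * e + l2 * t1 = 0 := by
    rw [hedef]
    field_simp
    nlinarith [hs]
  have he : e ≠ 0 := by
    intro h
    rw [h] at hnum
    simp at hnum
    exact hnum.elim hl2 ht1
  have hlame : lam e = 0 := by
    rw [hlam e, div_eq_zero_iff]
    left
    linarith [hnum]
  refine ⟨⟨e, he, ?_⟩, h32, ?_⟩
  · simp [hlame, h3.le]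
  · have : lam 0 = l2 := by
      rw [hlam 0]
      field_simp
      simp [ht1]
    rw [this]
    exact max_eq_left h32.le
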